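/- Let (u_n)_{n≥1} be a non-increasing sequence of real numbers such that there exist ε ∈ (0,1) and β ≥ 0 with u_n ≥ u_{⌊n^{1-ε}⌋} − β/n^ε for all n ≥ 2. Then there exists a constant c_ε > 0 such that for every n ≥ 2 and every integer n_f with 2 ≤ n_f ≤ n, u_n ≥ u_{n_f} − c_ε β/n_f^ε. In particular (u_n)_{n≥1} is bounded below. -/

import Mathlib

open Real

/-- Convergence of recursively bounded non-increasing sequences. -/
theorem stmt_1 (u : ℕ → ℝ) (hmono : ∀ m n : ℕ, 1 ≤ m → m ≤ n → u n ≤ u m)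
    (ε β : ℝ) (hε : ε ∈ Set.Ioo (0 : ℝ) 1) (hβ : 0 ≤ β)
    (hrec : ∀ n : ℕ, 2 ≤ n → u ⌊(n : ℝ) ^ (1 - ε)⌋₊ - β / (n : ℝ) ^ ε ≤ u n) :
    (∃ c > (0 : ℝ), ∀ n : ℕ, 2 ≤ n → ∀ nf : ℕ, 2 ≤ nf → nf ≤ n →
      u nf - c * β / (nf : ℝ) ^ ε ≤ u n) ∧
    ∃ C : ℝ, ∀ n : ℕ, 1 ≤ n → C ≤ u n := by
  obtain ⟨hε0, hε1⟩ := hε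
  have hεε : 0 < ε * ε := mul_pos hε0 hε0
  have h2 : (1:ℝ) < (2:ℝ) ^ (ε*ε) := by
    have : (2:ℝ) ^ (0:ℝ) < (2:ℝ) ^ (ε*ε) :=
      Real.rpow_lt_rpow_of_exponent_lt one_lt_two hεε
    simpa using this
  set a : ℝ := ((2:ℝ)^(ε*ε) - 1)⁻¹ with ha
  have ha0 : 0 < a := inv_pos.mpr (by linarith)
  have hac : a * (2:ℝ)^(ε*ε) = 1 + a := by
    have hne : (2:ℝ)^(ε*ε) - 1 ≠ 0 := by linarith
    rw [ha]
    field_simp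
    have hne2 : (2:ℝ)^ε^2 - 1 ≠ 0 := by rw [sq]; exact hne
    rw [div_eq_iff hne2, add_mul, one_div, inv_mul_cancel₀ hne2]; ring
  have key : ∀ n nf : ℕ, 2 ≤ nf → nf ≤ n →
      u nf - β * ((1+a) / (nf:ℝ)^ε - a / (n:ℝ)^ε) ≤ u n := by
    intro n
    induction n using Nat.strong_induction_on with
    | _ n ih =>
      intro nf hnf2 hle
      have hnfR : (2:ℝ) ≤ (nf:ℝ) := by exact_mod_cast hnf2
      have hnfpos : (0:ℝ) < (nf:ℝ) := by linarith
      have hnfε : (0:ℝ) < (nf:ℝ)^ε := Real.rpow_pos_of_pos hnfpos ε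
      rcases eq_or_lt_of_le hle with rfl | hlt
      · have : (1+a) / (nf:ℝ)^ε - a / (nf:ℝ)^ε = 1 / (nf:ℝ)^ε := by
          field_simp
          ring
        rw [this]
        have : 0 ≤ β * (1 / (nf:ℝ)^ε) := by positivity
        linarith
      · -- n > nf ≥ 2
        have hn2 : 2 ≤ n := by omega
        have hnR : (2:ℝ) ≤ (n:ℝ) := by exact_mod_cast hn2
        have hnpos : (0:ℝ) < (n:ℝ) := by linarith
        have hnε : (0:ℝ) < (n:ℝ)^ε := Real.rpow_pos_of_pos hnpos ε
        set m : ℕ := ⌊(n : ℝ) ^ (1 - ε)⌋₊ with hm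
        have hstep : u m - β / (n : ℝ) ^ ε ≤ u n := hrec n hn2
        have h1m : 1 ≤ m := by
          rw [hm]
          apply Nat.le_floor
          push_cast
          exact Real.one_le_rpow (by linarith) (by linarith)
        have hmle : (m:ℝ) ≤ (n:ℝ)^(1-ε) := by
          rw [hm]
          exact Nat.floor_le (by positivity)
        have hmn : m < n := by
          have h1 : (n:ℝ)^(1-ε) < (n:ℝ)^(1:ℝ) :=
            Real.rpow_lt_rpow_of_exponent_lt (by linarith) (by linarith)
          rw [Real.rpow_one] at h1
          exact_mod_cast lt_of_le_of_lt hmle h1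
        have hnfn : (nf:ℝ)^ε ≤ (n:ℝ)^ε := by
          apply Real.rpow_le_rpow (by positivity) _ hε0.le
          exact_mod_cast hle
        rcases lt_or_ge m nf with hcase | hcase
        · -- m < nf : use monotonicity
          have hum : u nf ≤ u m := hmono m nf h1m hcase.le
          have hterm : β / (n:ℝ)^ε ≤ β * ((1+a) / (nf:ℝ)^ε - a / (n:ℝ)^ε) := by
            have h1 : (1+a) / (n:ℝ)^ε ≤ (1+a) / (nf:ℝ)^ε := by
              apply div_le_div_of_nonneg_left (by linarith) hnfε hnfn
            have h2' : 1 / (n:ℝ)^ε + a / (n:ℝ)^ε = (1+a) / (n:ℝ)^ε := by ring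
            have h3 : 1 / (n:ℝ)^ε ≤ (1+a) / (nf:ℝ)^ε - a / (n:ℝ)^ε := by linarith
            calc β / (n:ℝ)^ε = β * (1 / (n:ℝ)^ε) := by ring
              _ ≤ β * ((1+a) / (nf:ℝ)^ε - a / (n:ℝ)^ε) :=
                mul_le_mul_of_nonneg_left h3 hβ
          linarith
        · -- m ≥ nf : use induction hypothesis
          have hIH := ih m hmn nf hnf2 hcase
          have hmR : (0:ℝ) < (m:ℝ) := by
            have : (1:ℝ) ≤ (m:ℝ) := by exact_mod_cast h1m
            linarith
          have hmε : (0:ℝ) < (m:ℝ)^ε := Real.rpow_pos_of_pos hmR ε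
          -- key inequality : (1+a)/n^ε ≤ a/m^ε
          have hkey : (1+a) / (n:ℝ)^ε ≤ a / (m:ℝ)^ε := by
            have hmpow : (m:ℝ)^ε ≤ (n:ℝ)^(ε - ε*ε) := by
              have h1 : (m:ℝ)^ε ≤ ((n:ℝ)^(1-ε))^ε :=
                Real.rpow_le_rpow hmR.le hmle hε0.le
              rw [← Real.rpow_mul hnpos.le] at h1
              calc (m:ℝ)^ε ≤ (n:ℝ)^((1-ε)*ε) := h1
                _ = (n:ℝ)^(ε - ε*ε) := by congr 1; ring
            have hsplit : (n:ℝ)^ε = (n:ℝ)^(ε - ε*ε) * (n:ℝ)^(ε*ε) := by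
              rw [← Real.rpow_add hnpos]; ring_nf
            have h2n : (2:ℝ)^(ε*ε) ≤ (n:ℝ)^(ε*ε) :=
              Real.rpow_le_rpow (by norm_num) hnR hεε.le
            have hpos1 : (0:ℝ) < (n:ℝ)^(ε - ε*ε) := Real.rpow_pos_of_pos hnpos _
            have hpos2 : (0:ℝ) < (n:ℝ)^(ε*ε) := Real.rpow_pos_of_pos hnpos _
            rw [div_le_div_iff₀ hnε hmε]
            -- goal : (1+a) * m^ε ≤ a * n^ε
            calc (1+a) * (m:ℝ)^ε ≤ (1+a) * (n:ℝ)^(ε - ε*ε) := by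
                  apply mul_le_mul_of_nonneg_left hmpow (by linarith)
              _ = a * (2:ℝ)^(ε*ε) * (n:ℝ)^(ε - ε*ε) := by rw [hac]
              _ ≤ a * (n:ℝ)^(ε*ε) * (n:ℝ)^(ε - ε*ε) := by
                  apply mul_le_mul_of_nonneg_right _ hpos1.le
                  exact mul_le_mul_of_nonneg_left h2n ha0.le
              _ = a * (n:ℝ)^ε := by rw [hsplit]; ring
          have hterm : β * ((1+a) / (nf:ℝ)^ε - a / (m:ℝ)^ε) + β / (n:ℝ)^ε
              ≤ β * ((1+a) / (nf:ℝ)^ε - a / (n:ℝ)^ε) := by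
            have h3 : a / (n:ℝ)^ε + 1 / (n:ℝ)^ε ≤ a / (m:ℝ)^ε := by
              have : a / (n:ℝ)^ε + 1 / (n:ℝ)^ε = (1+a)/(n:ℝ)^ε := by ring
              linarith [this ▸ hkey]
            have := mul_le_mul_of_nonneg_left h3 hβ
            have hβn : β / (n:ℝ)^ε = β * (1/(n:ℝ)^ε) := by ring
            nlinarith [this]
          linarith
  constructor
  · refine ⟨1 + a, by linarith, ?_⟩
    intro n hn2 nf hnf2 hle
    have hk := key n nf hnf2 hle
    have hnpos : (0:ℝ) < (n:ℝ) := by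
      have : (2:ℝ) ≤ (n:ℝ) := by exact_mod_cast hn2
      linarith
    have hnε : (0:ℝ) < (n:ℝ)^ε := Real.rpow_pos_of_pos hnpos ε
    have h1 : 0 ≤ β * (a / (n:ℝ)^ε) := by positivity
    have h2' : (1+a) * β / (nf:ℝ)^ε = β * ((1+a)/(nf:ℝ)^ε) := by ring
    nlinarith [hk]
  · refine ⟨u 2 - (1+a) * β / (2:ℝ)^ε, ?_⟩
    intro n hn1
    have hpos : (0:ℝ) < (2:ℝ)^ε := Real.rpow_pos_of_pos two_pos ε
    have hnonneg : 0 ≤ (1+a) * β / (2:ℝ)^ε := by positivity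
    rcases eq_or_lt_of_le hn1 with rfl | h2n
    · have := hmono 1 2 le_rfl (by norm_num)
      linarith
    · have hn2 : 2 ≤ n := h2n
      have hk := key n 2 le_rfl hn2
      have hnpos : (0:ℝ) < (n:ℝ) := by
        have : (2:ℝ) ≤ (n:ℝ) := by exact_mod_cast hn2
        linarith
      have hnε : (0:ℝ) < (n:ℝ)^ε := Real.rpow_pos_of_pos hnpos ε
      have hcast : ((2:ℕ):ℝ) = (2:ℝ) := by norm_num
      rw [hcast] at hk
      have h1 : 0 ≤ β * (a / (n:ℝ)^ε) := by positivity
      have hms : β * ((1+a)/(2:ℝ)^ε - a/(n:ℝ)^ε)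
          = β*((1+a)/(2:ℝ)^ε) - β*(a/(n:ℝ)^ε) := by ring
      have heq : (1+a) * β / (2:ℝ)^ε = β*((1+a)/(2:ℝ)^ε) := by ring
      linarith
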